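/- Let X be a Tychonoff space and let V(X) be the free topological vector space over X. For every natural number n, the set SP_n(X) := {λ₁x₁ + ⋯ + λₙxₙ : λᵢ ∈ [−n,n], xᵢ ∈ X} is a closed subset of V(X). -/

import Mathlib

open Topology Set

universe u v w

/-- `IsFreeTVS V i` says that the (real) topological vector space `V` together with the
continuous map `i : X → V` is the free topological vector space over `X`: every continuous
map from `X` to a topological vector space `E` extends uniquely to a continuous linear
operator `V →L[ℝ] E`. -/
def IsFreeTVS {X : Type u} [TopologicalSpace X] (V : Type v) [AddCommGroup V] [Module ℝ V]
    [TopologicalSpace V] [IsTopologicalAddGroup V] [ContinuousSMul ℝ V] (i : X → V) : Prop :=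
  Continuous i ∧
    ∀ (E : Type w) [AddCommGroup E] [Module ℝ E] [TopologicalSpace E]
      [IsTopologicalAddGroup E] [ContinuousSMul ℝ E] (f : X → E),
      Continuous f → ∃! g : V →L[ℝ] E, ∀ x, g (i x) = f x

/-- `SPn i n` is the set `SP_n(X) = {λ₁x₁ + ⋯ + λₙxₙ : λᵢ ∈ [−n,n], xᵢ ∈ X}` inside `V`. -/
def SPn {X : Type u} {V : Type v} [AddCommGroup V] [Module ℝ V]
    (i : X → V) (n : ℕ) : Set V :=
  {v | ∃ (c : Fin n → ℝ) (x : Fin n → X),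
    (∀ j, c j ∈ Set.Icc (-(n : ℝ)) (n : ℝ)) ∧ v = ∑ j, c j • i (x j)}

section Auxiliary

universe w'

/-- A copy of `ℝ` (with its usual topology) in an arbitrary universe. -/
def RU : Type w' := ULift ℝ

instance : AddCommGroup RU := inferInstanceAs (AddCommGroup (ULift ℝ))
noncomputable instance : Module ℝ RU := inferInstanceAs (Module ℝ (ULift ℝ))
instance : TopologicalSpace RU := inferInstanceAs (TopologicalSpace (ULift ℝ))
instance : IsTopologicalAddGroup RU := inferInstanceAs (IsTopologicalAddGroup (ULift ℝ))
instance : ContinuousSMul ℝ RU := inferInstanceAs (ContinuousSMul ℝ (ULift ℝ))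

/-- The projection `RU → ℝ` as a linear map. -/
def dwnRU : RU.{w'} →ₗ[ℝ] ℝ where
  toFun := ULift.down
  map_add' := fun _ _ => rfl
  map_smul' := fun _ _ => rfl

/-- A copy of `ℝ` with the *indiscrete* topology, in an arbitrary universe. -/
def IR : Type w' := ULift ℝ

instance : AddCommGroup IR := inferInstanceAs (AddCommGroup (ULift ℝ))
noncomputable instance : Module ℝ IR := inferInstanceAs (Module ℝ (ULift ℝ))
instance : TopologicalSpace IR := ⊤
instance : IsTopologicalAddGroup IR where
  continuous_add := continuous_top
  continuous_neg := continuous_top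
instance : ContinuousSMul ℝ IR := ⟨continuous_top⟩

open Classical in
private lemma sum_smul_group {X : Type u} {V : Type v} [AddCommGroup V] [Module ℝ V]
    (i : X → V) {N N' : ℕ} (d : Fin N → ℝ) (u : Fin N → X) (e : Fin N' → ℝ) (w : Fin N' → X)
    (h : ∀ p : X, (∑ k, if u k = p then d k else 0) = ∑ j, if w j = p then e j else 0) :
    ∑ k, d k • i (u k) = ∑ j, e j • i (w j) := by
  classical
  set S : Finset X := Finset.univ.image u ∪ Finset.univ.image w with hS
  have key : ∀ (M : ℕ) (f : Fin M → ℝ) (uf : Fin M → X), (∀ k, uf k ∈ S) →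
      ∑ k, f k • i (uf k) = ∑ p ∈ S, (∑ k, if uf k = p then f k else 0) • i p := by
    intro M f uf hmem
    have : ∀ p ∈ S, (∑ k, if uf k = p then f k else 0) • i p
        = ∑ k, if uf k = p then f k • i p else 0 := by
      intro p _
      rw [Finset.sum_smul]
      exact Finset.sum_congr rfl fun k _ => by split <;> simp
    rw [Finset.sum_congr rfl this, Finset.sum_comm]
    refine Finset.sum_congr rfl fun k _ => ?_
    rw [Finset.sum_ite_eq S (uf k) (fun p => f k • i p), if_pos (hmem k)]
  rw [key N d u (fun k => Finset.mem_union_left _ (Finset.mem_image_of_mem u (Finset.mem_univ k))),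
    key N' e w (fun j => Finset.mem_union_right _ (Finset.mem_image_of_mem w (Finset.mem_univ j)))]
  exact Finset.sum_congr rfl fun p _ => by rw [h p]

variable {X : Type u} [TopologicalSpace X]

private noncomputable def psiAux (n : ℕ)
    (cb : (Fin n → (Set.Icc (-(n:ℝ)) (n:ℝ))) × (Fin n → StoneCech X))
    (f : C(X, Set.Icc (0:ℝ) 1)) : ℝ :=
  ∑ j, (cb.1 j : ℝ) * ((stoneCechExtend (map_continuous f)) (cb.2 j) : ℝ)

private lemma psiAux_continuous (n : ℕ) : Continuous (psiAux (X := X) n) := by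
  refine continuous_pi fun f => ?_
  refine continuous_finset_sum _ fun j _ => ?_
  exact (continuous_subtype_val.comp ((continuous_apply j).comp continuous_fst)).mul
    (continuous_subtype_val.comp ((continuous_stoneCechExtend _).comp
      ((continuous_apply j).comp continuous_snd)))

private lemma psiAux_isClosed_range (n : ℕ) : IsClosed (Set.range (psiAux (X := X) n)) :=
  (isCompact_range (psiAux_continuous n)).isClosed

end Auxiliary

/-- If `X` is a Tychonoff space and `(V, i)` is the free topological vector
space over `X`, then for every `n ∈ ℕ` the set
`SP_n(X) = {λ₁x₁ + ⋯ + λₙxₙ : λᵢ ∈ [−n,n], xᵢ ∈ X}` is closed in `V`. -/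
theorem isClosed_SPn_of_isFreeTVS
    {X : Type u} [TopologicalSpace X] [T35Space X]
    (V : Type v) [AddCommGroup V] [Module ℝ V] [TopologicalSpace V]
    [IsTopologicalAddGroup V] [ContinuousSMul ℝ V] (i : X → V)
    (hV : IsFreeTVS V i) (n : ℕ) :
    IsClosed (SPn i n) := by
  classical
  obtain ⟨hi, hext⟩ := hV
  have hex : ∀ f : C(X, Set.Icc (0:ℝ) 1), ∃ gg : V →L[ℝ] RU,
      ∀ x, gg (i x) = ULift.up (f x : ℝ) :=
    fun f => (@hext RU _ _ _ instIsTopologicalAddGroupRU _ (fun x => ULift.up ((f x : ℝ)))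
      (continuous_uliftUp.comp (continuous_subtype_val.comp (map_continuous f)))).exists
  choose g hg using hex
  have hΦc : Continuous (fun v => fun f : C(X, Set.Icc (0:ℝ) 1) => dwnRU (g f v)) :=
    continuous_pi fun f => continuous_uliftDown.comp (g f).continuous
  have hΦsum : ∀ (f : C(X, Set.Icc (0:ℝ) 1)) (N : ℕ) (d : Fin N → ℝ) (y : Fin N → X),
      dwnRU (g f (∑ k, d k • i (y k))) = ∑ k, d k * (f (y k) : ℝ) := by
    intro f N d y
    rw [map_sum, map_sum]
    refine Finset.sum_congr rfl fun k _ => ?_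
    rw [map_smul, hg]
    rfl
  have hext_unit : ∀ (f : C(X, Set.Icc (0:ℝ) 1)) (x : X),
      stoneCechExtend (map_continuous f) (stoneCechUnit x) = f x :=
    fun f x => congrFun (stoneCechExtend_extends (map_continuous f)) x
  have hspan : ∀ u : V, u ∈ Submodule.span ℝ (Set.range i) := by
    intro u
    by_contra hu
    obtain ⟨φ, hφu, hφmap⟩ := Submodule.exists_dual_map_eq_bot_of_notMem hu inferInstance
    have hφi : ∀ x : X, φ (i x) = 0 := by
      intro x
      have hx : φ (i x) ∈ (Submodule.span ℝ (Set.range i)).map φ :=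
        Submodule.mem_map_of_mem (Submodule.subset_span ⟨x, rfl⟩)
      rw [hφmap] at hx
      simpa using hx
    let G2 : V →L[ℝ] IR :=
      { toFun := fun u => ULift.up (φ u)
        map_add' := fun a b => by show ULift.up (φ (a+b)) = _; rw [map_add]; rfl
        map_smul' := fun r a => by show ULift.up (φ (r • a)) = _; rw [map_smul]; rfl
        cont := continuous_top }
    obtain ⟨G, hG, hGuniq⟩ := hext IR (fun _ : X => (0 : IR)) continuous_const
    have h2 : G2 = G := hGuniq G2 (fun x => by
      show ULift.up (φ (i x)) = 0
      rw [hφi]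
      rfl)
    have h0 : (0 : V →L[ℝ] IR) = G := hGuniq 0 (fun x => rfl)
    have hz : G2 u = 0 := by rw [h2, ← h0]; rfl
    exact hφu (congrArg ULift.down hz)
  suffices hkey : SPn i n = (fun v => fun f : C(X, Set.Icc (0:ℝ) 1) => dwnRU (g f v)) ⁻¹'
      (Set.range (psiAux (X := X) n)) by
    rw [hkey]; exact (psiAux_isClosed_range n).preimage hΦc
  ext v
  simp only [Set.mem_preimage]
  constructor
  · rintro ⟨c, x, hc, rfl⟩
    refine ⟨(fun j => ⟨c j, hc j⟩, fun j => stoneCechUnit (x j)), ?_⟩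
    funext f
    show ∑ j, (c j) * ((stoneCechExtend (map_continuous f)) (stoneCechUnit (x j)) : ℝ) = _
    rw [hΦsum f n c x]
    exact Finset.sum_congr rfl fun j _ => by rw [hext_unit]
  · rintro ⟨⟨c, b⟩, hΨv⟩
    by_cases hX : Nonempty X
    case neg =>
      rcases Nat.eq_zero_or_pos n with hn | hn
      · subst hn
        have hv0 : v = 0 := by
          have h := hspan v
          haveI : IsEmpty X := not_nonempty_iff.1 hX
          rw [Set.range_eq_empty i, Submodule.span_empty, Submodule.mem_bot] at h
          exact h
        exact ⟨Fin.elim0, Fin.elim0, fun j => j.elim0, by simp [hv0]⟩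
      · exfalso
        haveI : IsEmpty X := not_nonempty_iff.1 hX
        haveI : Nonempty (StoneCech X) := ⟨b ⟨0, hn⟩⟩
        exact hX (denseRange_stoneCechUnit.nonempty)
    case pos =>
    haveI := hX
    obtain ⟨m, a, t', ht'⟩ := Submodule.mem_span_set'.1 (hspan v)
    choose t htt using fun k => (t' k).2
    have hvrep : v = ∑ k, a k • i (t k) := by
      rw [← ht']
      exact (Finset.sum_congr rfl fun k _ => by rw [htt]).symm
    have hui : Function.Injective (stoneCechUnit : X → StoneCech X) := by
      intro p q hpq
      by_contra hne
      obtain ⟨f, hfc, hf0, hf1⟩ := CompletelyRegularSpace.completely_regular p {q}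
        isClosed_singleton (by simpa using hne)
      have h01 := eq_if_stoneCechUnit_eq hfc hpq
      rw [hf0, hf1 rfl] at h01
      exact absurd (congrArg Subtype.val h01) (by norm_num)
    have hΦv : ∀ f : C(X, Set.Icc (0:ℝ) 1),
        (∑ j, (c j : ℝ) * ((stoneCechExtend (map_continuous f)) (b j) : ℝ))
          = ∑ k, a k * (f (t k) : ℝ) := by
      intro f
      have h1 := congrFun hΨv f
      simp only [psiAux] at h1
      rw [h1, hvrep, hΦsum]
    have key2 : ∀ z : StoneCech X,
        (∑ k, if stoneCechUnit (t k) = z then a k else 0)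
          = ∑ j, if b j = z then (c j : ℝ) else 0 := by
      intro z
      set S : Finset (StoneCech X) :=
        (Finset.univ.image fun k => stoneCechUnit (t k)) ∪ Finset.univ.image b with hSdef
      have hmemL : ∀ k, stoneCechUnit (t k) ∈ S := fun k =>
        Finset.mem_union_left _ (Finset.mem_image_of_mem _ (Finset.mem_univ k))
      have hmemR : ∀ j, b j ∈ S := fun j =>
        Finset.mem_union_right _ (Finset.mem_image_of_mem _ (Finset.mem_univ j))
      by_cases hz : z ∈ S
      · obtain ⟨G, hG0, hG1, hG01⟩ := exists_continuous_zero_one_of_isClosed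
          ((S.erase z).finite_toSet.isClosed) (isClosed_singleton (x := z))
          (Set.disjoint_singleton_right.2 (by simp))
        have hG1z : G z = 1 := hG1 rfl
        have hG0' : ∀ w, w ∈ S → w ≠ z → G w = 0 := fun w hw hwz =>
          hG0 (by simp [Finset.mem_erase, hwz, hw])
        let h : C(X, Set.Icc (0:ℝ) 1) :=
          ⟨fun x => ⟨G (stoneCechUnit x), hG01 _⟩,
            Continuous.subtype_mk ((map_continuous G).comp continuous_stoneCechUnit) _⟩
        have hexth : ∀ z' : StoneCech X,
            stoneCechExtend (map_continuous h) z' = ⟨G z', hG01 z'⟩ := by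
          have hcG' : Continuous fun z' : StoneCech X => (⟨G z', hG01 z'⟩ : Set.Icc (0:ℝ) 1) :=
            Continuous.subtype_mk (map_continuous G) _
          have := stoneCech_hom_ext (continuous_stoneCechExtend (map_continuous h)) hcG'
            (funext fun x => by
              simp only [Function.comp_apply]
              rw [hext_unit h x]
              rfl)
          exact fun z' => congrFun this z'
        have hmain := hΦv h
        have hL : (∑ j, (c j : ℝ) * ((stoneCechExtend (map_continuous h)) (b j) : ℝ))
            = ∑ j, if b j = z then (c j : ℝ) else 0 := by
          refine Finset.sum_congr rfl fun j _ => ?_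
          rw [hexth (b j)]
          by_cases hbz : b j = z
          · rw [if_pos hbz]
            show (c j : ℝ) * G (b j) = _
            rw [hbz, hG1z, mul_one]
          · rw [if_neg hbz]
            show (c j : ℝ) * G (b j) = 0
            rw [hG0' (b j) (hmemR j) hbz, mul_zero]
        have hR : (∑ k, a k * (h (t k) : ℝ))
            = ∑ k, if stoneCechUnit (t k) = z then a k else 0 := by
          refine Finset.sum_congr rfl fun k _ => ?_
          by_cases htz : stoneCechUnit (t k) = z
          · rw [if_pos htz]
            show a k * G (stoneCechUnit (t k)) = _
            rw [htz, hG1z, mul_one]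
          · rw [if_neg htz]
            show a k * G (stoneCechUnit (t k)) = 0
            rw [hG0' _ (hmemL k) htz, mul_zero]
        calc (∑ k, if stoneCechUnit (t k) = z then a k else 0)
            = ∑ k, a k * (h (t k) : ℝ) := hR.symm
          _ = ∑ j, (c j : ℝ) * ((stoneCechExtend (map_continuous h)) (b j) : ℝ) := hmain.symm
          _ = ∑ j, if b j = z then (c j : ℝ) else 0 := hL
      · rw [Finset.sum_eq_zero fun k _ => if_neg (fun hc => hz (by rw [← hc]; exact hmemL k)),
          Finset.sum_eq_zero fun j _ => if_neg (fun hc => hz (by rw [← hc]; exact hmemR j))]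
    refine ⟨fun j => if _ : b j ∈ Set.range (stoneCechUnit : X → StoneCech X)
        then (c j : ℝ) else 0,
      fun j => if hbj : b j ∈ Set.range (stoneCechUnit : X → StoneCech X)
        then hbj.choose else Classical.arbitrary X, fun j => ?_, ?_⟩
    · by_cases hbj : b j ∈ Set.range (stoneCechUnit : X → StoneCech X)
      · simp only [dif_pos hbj]; exact (c j).2
      · simp only [dif_neg hbj]
        exact ⟨neg_nonpos.2 (Nat.cast_nonneg n), Nat.cast_nonneg n⟩
    · rw [hvrep]
      refine sum_smul_group i a t _ _ fun p => ?_
      have e1 : (∑ k, if t k = p then a k else 0)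
          = ∑ k, if stoneCechUnit (t k) = stoneCechUnit p then a k else 0 :=
        Finset.sum_congr rfl fun k _ => by rw [hui.eq_iff]
      rw [e1, key2 (stoneCechUnit p)]
      refine Finset.sum_congr rfl fun j _ => ?_
      by_cases hbj : b j ∈ Set.range (stoneCechUnit : X → StoneCech X)
      · simp only [dif_pos hbj]
        have hch : stoneCechUnit (hbj.choose) = b j := hbj.choose_spec
        by_cases hp : b j = stoneCechUnit p
        · rw [if_pos hp, if_pos (hui (hch.trans hp))]
        · rw [if_neg hp, if_neg (fun h' => hp (by rw [← hch, h']))]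
      · simp only [dif_neg hbj]
        rw [if_neg (fun h' : b j = stoneCechUnit p => hbj ⟨p, h'.symm⟩), ite_self]
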